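/- Let o be a complete discrete valuation ring with finite residue field, and let f₁ : X → X₁ and f₂ : X → X₂ be surjective maps of finite sets. Let X₁ ⊔_X X₂ denote the pushout of (X₁ ← X → X₂) in the category of sets, with structural maps g₁ : X₁ → X₁ ⊔_X X₂ and g₂ : X₂ → X₁ ⊔_X X₂. For a finite set Y write o^Y for the o-module of functions Y → o. Define Φ : o^{X₁} ⊕ o^{X₂} → o^X by Φ(φ, ψ) = φ∘f₁ + ψ∘f₂ and Ψ : o^{X₁⊔_X X₂} → o^{X₁} ⊕ o^{X₂} by Ψ(h) = (h∘g₁, −h∘g₂). Then: (a) Ψ is injective and its image equals ker Φ, so 0 → o^{X₁⊔_X X₂} → o^{X₁} ⊕ o^{X₂} → o^X is exact; (b) this sequence is universally exact, i.e. it remains exact after applying − ⊗_o R for every commutative o-algebra R finitely generated as an o-module (equivalently, the image of Φ is an o-module direct summand of o^X). -/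

import Mathlib

open IsLocalRing

section PushoutOfSets

variable {X X₁ X₂ : Type} (f₁ : X → X₁) (f₂ : X → X₂)

/-- The relation generating the pushout `X₁ ⊔_X X₂` of `X₁ ← X → X₂`. -/
def pushoutRel (a b : X₁ ⊕ X₂) : Prop :=
  ∃ x : X, a = Sum.inl (f₁ x) ∧ b = Sum.inr (f₂ x)

/-- The pushout `X₁ ⊔_X X₂` of `X₁ ← X → X₂` in the category of sets. -/
def SetPushout : Type := Quot (pushoutRel f₁ f₂)

/-- The first structural map `g₁ : X₁ → X₁ ⊔_X X₂`. -/
def pushoutInl : X₁ → SetPushout f₁ f₂ := fun a => Quot.mk _ (Sum.inl a)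

/-- The second structural map `g₂ : X₂ → X₁ ⊔_X X₂`. -/
def pushoutInr : X₂ → SetPushout f₁ f₂ := fun a => Quot.mk _ (Sum.inr a)

variable (o : Type) [CommRing o]

/-- The map `Φ : o^{X₁} ⊕ o^{X₂} → o^X`, `Φ(φ, ψ) = φ∘f₁ + ψ∘f₂`. -/
noncomputable def pushoutPhi : ((X₁ → o) × (X₂ → o)) →ₗ[o] (X → o) :=
  (LinearMap.funLeft o o f₁).comp (LinearMap.fst o (X₁ → o) (X₂ → o)) +
    (LinearMap.funLeft o o f₂).comp (LinearMap.snd o (X₁ → o) (X₂ → o))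

/-- The map `Ψ : o^{X₁ ⊔_X X₂} → o^{X₁} ⊕ o^{X₂}`, `Ψ(h) = (h∘g₁, −h∘g₂)`. -/
noncomputable def pushoutPsi : (SetPushout f₁ f₂ → o) →ₗ[o] ((X₁ → o) × (X₂ → o)) :=
  LinearMap.prod (LinearMap.funLeft o o (pushoutInl f₁ f₂))
    (-(LinearMap.funLeft o o (pushoutInr f₁ f₂)))

end PushoutOfSets

section Key

variable {X X₁ X₂ : Type} (f₁ : X → X₁) (f₂ : X → X₂)

lemma pushout_glue (x : X) :
    pushoutInl f₁ f₂ (f₁ x) = pushoutInr f₁ f₂ (f₂ x) :=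
  Quot.sound ⟨x, rfl, rfl⟩

lemma pushoutPsi_apply (o : Type) [CommRing o] (h : SetPushout f₁ f₂ → o) :
    pushoutPsi f₁ f₂ o h = (h ∘ pushoutInl f₁ f₂, -(h ∘ pushoutInr f₁ f₂)) := rfl

lemma pushoutPhi_apply (o : Type) [CommRing o] (y : (X₁ → o) × (X₂ → o)) :
    pushoutPhi f₁ f₂ o y = y.1 ∘ f₁ + y.2 ∘ f₂ := rfl

lemma key (hf₂ : Function.Surjective f₂) (A : Type) [CommRing A] :
    Function.Injective (pushoutPsi f₁ f₂ A) ∧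
      Function.Exact (pushoutPsi f₁ f₂ A) (pushoutPhi f₁ f₂ A) := by
  constructor
  · intro h h' heq
    have h1 : h ∘ pushoutInl f₁ f₂ = h' ∘ pushoutInl f₁ f₂ :=
      congrArg Prod.fst heq
    funext p
    induction p using Quot.ind with
    | _ s =>
      cases s with
      | inl a => exact congrFun h1 a
      | inr b =>
        obtain ⟨x, rfl⟩ := hf₂ b
        have := pushout_glue f₁ f₂ x
        calc h (Quot.mk _ (Sum.inr (f₂ x)))
            = h (pushoutInl f₁ f₂ (f₁ x)) := by rw [this]; rfl
          _ = h' (pushoutInl f₁ f₂ (f₁ x)) := congrFun h1 (f₁ x)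
          _ = h' (Quot.mk _ (Sum.inr (f₂ x))) := by rw [this]; rfl
  · intro y
    constructor
    · intro hy
      have hy' : ∀ x, y.1 (f₁ x) + y.2 (f₂ x) = 0 := by
        intro x
        have := congrFun hy x
        simpa [pushoutPhi_apply] using this
      have hcompat : ∀ a b, pushoutRel f₁ f₂ a b →
          Sum.elim y.1 (-y.2) a = Sum.elim y.1 (-y.2) b := by
        rintro a b ⟨x, rfl, rfl⟩
        simp only [Sum.elim_inl, Sum.elim_inr, Pi.neg_apply]
        linear_combination hy' x
      refine ⟨Quot.lift (Sum.elim y.1 (-y.2)) hcompat, ?_⟩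
      show ((Quot.lift (Sum.elim y.1 (-y.2)) hcompat : SetPushout f₁ f₂ → A) ∘ pushoutInl f₁ f₂,
        -((Quot.lift (Sum.elim y.1 (-y.2)) hcompat : SetPushout f₁ f₂ → A) ∘ pushoutInr f₁ f₂)) = y
      refine Prod.ext rfl ?_
      funext b
      show -(Sum.elim y.1 (-y.2) (Sum.inr b)) = y.2 b
      simp
    · rintro ⟨h, rfl⟩
      rw [pushoutPsi_apply, pushoutPhi_apply]
      funext x
      simp only [Pi.add_apply, Function.comp_apply, Pi.neg_apply]
      rw [pushout_glue f₁ f₂ x]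
      simp

end Key

section Transfer

open scoped TensorProduct

set_option synthInstance.maxHeartbeats 1000000 in
set_option maxHeartbeats 2000000 in
lemma baseChange_transfer {X X₁ X₂ : Type} [Finite X] [Finite X₁] [Finite X₂]
    (f₁ : X → X₁) (f₂ : X → X₂) (hf₂ : Function.Surjective f₂)
    (o : Type) [CommRing o] (R : Type) [CommRing R] [Algebra o R] :
    Function.Injective ((pushoutPsi f₁ f₂ o).baseChange R) ∧
      Function.Exact ((pushoutPsi f₁ f₂ o).baseChange R)
        ((pushoutPhi f₁ f₂ o).baseChange R) := by
  classical
  have : Finite (SetPushout f₁ f₂) := Quot.finite _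
  have := Fintype.ofFinite X
  have := Fintype.ofFinite X₁
  have := Fintype.ofFinite X₂
  have := Fintype.ofFinite (SetPushout f₁ f₂)
  set eA := TensorProduct.piScalarRight o R R (SetPushout f₁ f₂) with heA
  set eC := TensorProduct.piScalarRight o R R X with heC
  set eB : (R ⊗[o] ((X₁ → o) × (X₂ → o))) ≃ₗ[o] ((X₁ → R) × (X₂ → R)) :=
    (TensorProduct.prodRight o o R (X₁ → o) (X₂ → o)).trans
      (((TensorProduct.piScalarRight o R R X₁).restrictScalars o).prodCongr
        ((TensorProduct.piScalarRight o R R X₂).restrictScalars o)) with heB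
  have hsq1 : ∀ z, eB ((pushoutPsi f₁ f₂ o).baseChange R z)
      = pushoutPsi f₁ f₂ R (eA z) := by
    intro z
    induction z using TensorProduct.induction_on with
    | zero => simp
    | tmul r h =>
      simp only [LinearMap.baseChange_tmul, heA, heB, pushoutPsi_apply,
        LinearEquiv.trans_apply, TensorProduct.piScalarRight_apply]
      refine Prod.ext ?_ ?_ <;>
      · funext a
        simp [TensorProduct.prodRight_tmul, pushoutPsi_apply, neg_smul]
    | add z₁ z₂ ih₁ ih₂ => simp only [map_add, ih₁, ih₂]
  have hsq2 : ∀ z, eC ((pushoutPhi f₁ f₂ o).baseChange R z)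
      = pushoutPhi f₁ f₂ R (eB z) := by
    intro z
    induction z using TensorProduct.induction_on with
    | zero => simp
    | tmul r y =>
      obtain ⟨u, v⟩ := y
      simp only [LinearMap.baseChange_tmul, heC, heB, pushoutPhi_apply,
        LinearEquiv.trans_apply, TensorProduct.piScalarRight_apply]
      funext x
      simp [TensorProduct.prodRight_tmul, pushoutPhi_apply, add_smul]
    | add z₁ z₂ ih₁ ih₂ => simp only [map_add, ih₁, ih₂]
  obtain ⟨hinj, hex⟩ := key f₁ f₂ hf₂ R
  constructor
  · intro z z' hzz
    have : pushoutPsi f₁ f₂ R (eA z) = pushoutPsi f₁ f₂ R (eA z') := by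
      rw [← hsq1, ← hsq1, hzz]
    exact eA.injective (hinj this)
  · intro y
    constructor
    · intro hy
      have h0 : pushoutPhi f₁ f₂ R (eB y) = 0 := by
        rw [← hsq2, hy, map_zero]
      obtain ⟨h, hh⟩ := (hex (eB y)).mp h0
      refine ⟨eA.symm h, ?_⟩
      apply eB.injective
      rw [hsq1, eA.apply_symm_apply, hh]
    · rintro ⟨z, rfl⟩
      apply eC.injective
      rw [hsq2, map_zero]
      exact (hex _).mpr ⟨eA z, (hsq1 z).symm⟩

end Transfer


/-- Let `o` be a complete discrete valuation ring with finite residue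
field, `f₁ : X → X₁` and `f₂ : X → X₂` surjections of finite sets.  Then
`0 → o^{X₁⊔_X X₂} → o^{X₁} ⊕ o^{X₂} → o^X` is exact, and it is universally exact: it
remains exact after `− ⊗_o R` for every commutative `o`-algebra `R` finitely generated
as an `o`-module. -/
theorem pushout_sequence_universally_exact
    (o : Type) [CommRing o] [IsDomain o] [IsDiscreteValuationRing o]
    [IsAdicComplete (maximalIdeal o) o] [Finite (ResidueField o)]
    {X X₁ X₂ : Type} [Finite X] [Finite X₁] [Finite X₂]
    (f₁ : X → X₁) (f₂ : X → X₂)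
    (hf₁ : Function.Surjective f₁) (hf₂ : Function.Surjective f₂) :
    (Function.Injective (pushoutPsi f₁ f₂ o) ∧
      Function.Exact (pushoutPsi f₁ f₂ o) (pushoutPhi f₁ f₂ o)) ∧
    ∀ (R : Type) [CommRing R] [Algebra o R] [Module.Finite o R],
      Function.Injective ((pushoutPsi f₁ f₂ o).baseChange R) ∧
      Function.Exact ((pushoutPsi f₁ f₂ o).baseChange R)
        ((pushoutPhi f₁ f₂ o).baseChange R) := by
  exact ⟨key f₁ f₂ hf₂ o, fun R _ _ _ => baseChange_transfer f₁ f₂ hf₂ o R⟩
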